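/- Let p = (p_1,...,p_N) be a fixed probability vector and, for a probability vector q = (q_1,...,q_N), let r be the convolution r_j = ∑_{k} p_{j+1-k} q_k (indices restricted to valid range, j = 1,...,2N-1), i.e., the distribution of the sum of independent variables with laws p and q supported on {1,...,N}. Then the function q ↦ H(r) - H(q) is convex in q, where H denotes Shannon entropy. -/

import Mathlib

/-- Shannon entropy of a pmf on a finite alphabet. -/
noncomputable def ent {α : Type*} [Fintype α] (p : α → ℝ) : ℝ :=
  -∑ x, p x * Real.log (p x)

/-- Convolution of two pmfs supported on `{0, …, N-1}` (i.e. `Fin N`,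
a 0-indexed version of `{1,…,N}`):  `r_j = ∑_{k+l=j} p_k q_l`, a pmf
supported on `{0, …, 2N-2}`.  This is the distribution of the sum of
independent variables with laws `p` and `q`. -/
noncomputable def convPQ (N : ℕ) (p q : Fin N → ℝ) : Fin (2 * N - 1) → ℝ :=
  fun j => ∑ k : Fin N, ∑ l : Fin N, if (k : ℕ) + l = (j : ℕ) then p k * q l else 0

noncomputable def phiKL (a b : ℝ) : ℝ := a * (Real.log a - Real.log b)

lemma logsum {a b c d : ℝ} (ha : 0 ≤ a) (hb : 0 ≤ b) (hab : b = 0 → a = 0)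
    (hc : 0 ≤ c) (hd : 0 ≤ d) (hcd : d = 0 → c = 0) :
    phiKL (a + c) (b + d) ≤ phiKL a b + phiKL c d := by
  unfold phiKL
  rcases eq_or_lt_of_le hb with hb0 | hb0
  · have ha0 : a = 0 := hab hb0.symm
    simp [ha0, ← hb0]
  rcases eq_or_lt_of_le hd with hd0 | hd0
  · have hc0 : c = 0 := hcd hd0.symm
    simp [hc0, ← hd0]
  rcases eq_or_lt_of_le ha with ha0 | ha0
  · have hlog : Real.log d ≤ Real.log (b + d) := Real.log_le_log hd0 (by linarith)
    simp only [← ha0, zero_add, zero_mul]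
    nlinarith
  rcases eq_or_lt_of_le hc with hc0 | hc0
  · have hlog : Real.log b ≤ Real.log (b + d) := Real.log_le_log hb0 (by linarith)
    simp only [← hc0, add_zero, zero_mul]
    nlinarith
  -- main case: everything positive
  have hac : 0 < a + c := by linarith
  have hbd : 0 < b + d := by linarith
  have key1 : a * (Real.log (a + c) - Real.log (b + d)) - a * (Real.log a - Real.log b)
      ≤ b * (a + c) / (b + d) - a := by
    have ht : 0 < b * (a + c) / (a * (b + d)) := by positivity
    have h := Real.log_le_sub_one_of_pos ht
    rw [Real.log_div (by positivity) (by positivity),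
      Real.log_mul hb0.ne' hac.ne', Real.log_mul ha0.ne' hbd.ne'] at h
    have h2 := mul_le_mul_of_nonneg_left h ha
    have e : a * (b * (a + c) / (a * (b + d)) - 1) = b * (a + c) / (b + d) - a := by
      field_simp
    nlinarith
  have key2 : c * (Real.log (a + c) - Real.log (b + d)) - c * (Real.log c - Real.log d)
      ≤ d * (a + c) / (b + d) - c := by
    have ht : 0 < d * (a + c) / (c * (b + d)) := by positivity
    have h := Real.log_le_sub_one_of_pos ht
    rw [Real.log_div (by positivity) (by positivity),
      Real.log_mul hd0.ne' hac.ne', Real.log_mul hc0.ne' hbd.ne'] at h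
    have h2 := mul_le_mul_of_nonneg_left h hc
    have e : c * (d * (a + c) / (c * (b + d)) - 1) = d * (a + c) / (b + d) - c := by
      field_simp
    nlinarith
  have hsum : b * (a + c) / (b + d) + d * (a + c) / (b + d) = a + c := by
    field_simp
  nlinarith

lemma phi_scale {u a b : ℝ} (hu : 0 < u) (ha : 0 ≤ a) (hab : b = 0 → a = 0) :
    phiKL (u * a) (u * b) = u * phiKL a b := by
  unfold phiKL
  rcases eq_or_lt_of_le ha with ha0 | ha0
  · simp [← ha0]
  have hb0 : b ≠ 0 := fun h => (hab h ▸ ha0).false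
  have hb0' : 0 < b ∨ b < 0 := hb0.lt_or_gt.symm
  rcases hb0'.symm with hb | hb
  · rw [Real.log_mul hu.ne' ha0.ne', Real.log_mul hu.ne' hb0]; ring
  · rw [Real.log_mul hu.ne' ha0.ne', Real.log_mul hu.ne' hb0]; ring

lemma phi_cvx {a b c d u v : ℝ} (ha : 0 ≤ a) (hb : 0 ≤ b) (hab : b = 0 → a = 0)
    (hc : 0 ≤ c) (hd : 0 ≤ d) (hcd : d = 0 → c = 0)
    (hu : 0 ≤ u) (hv : 0 ≤ v) (huv : u + v = 1) :
    phiKL (u * a + v * c) (u * b + v * d) ≤ u * phiKL a b + v * phiKL c d := by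
  rcases eq_or_lt_of_le hu with hu0 | hu0
  · have hv1 : v = 1 := by linarith
    simp [← hu0, hv1]
  rcases eq_or_lt_of_le hv with hv0 | hv0
  · have hu1 : u = 1 := by linarith
    simp [← hv0, hu1]
  rw [← phi_scale hu0 ha hab, ← phi_scale hv0 hc hcd]
  exact logsum (by positivity) (by positivity)
    (fun h => by rcases mul_eq_zero.mp h with h | h; · exact absurd h hu0.ne'
                 · simp [hab h])
    (by positivity) (by positivity)
    (fun h => by rcases mul_eq_zero.mp h with h | h; · exact absurd h hv0.ne'
                 · simp [hcd h])

lemma conv_nonneg {N : ℕ} {p q : Fin N → ℝ} (hp0 : ∀ k, 0 ≤ p k) (hq0 : ∀ k, 0 ≤ q k)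
    (j : Fin (2 * N - 1)) : 0 ≤ convPQ N p q j := by
  unfold convPQ
  refine Finset.sum_nonneg fun k _ => Finset.sum_nonneg fun l _ => ?_
  split_ifs
  · exact mul_nonneg (hp0 k) (hq0 l)
  · exact le_rfl

lemma conv_ge {N : ℕ} {p q : Fin N → ℝ} (hp0 : ∀ k, 0 ≤ p k) (hq0 : ∀ k, 0 ≤ q k)
    (i l : Fin N) (j : Fin (2 * N - 1)) (hj : (i : ℕ) + l = (j : ℕ)) :
    p i * q l ≤ convPQ N p q j := by
  unfold convPQ
  have h1 : p i * q l ≤ ∑ m : Fin N, if (i : ℕ) + m = (j : ℕ) then p i * q m else 0 := by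
    have := Finset.single_le_sum
      (f := fun m : Fin N => if (i : ℕ) + m = (j : ℕ) then p i * q m else 0)
      (fun m _ => by split_ifs
                     exacts [mul_nonneg (hp0 i) (hq0 m), le_rfl])
      (Finset.mem_univ l)
    simpa [hj] using this
  refine h1.trans (Finset.single_le_sum
    (f := fun k : Fin N => ∑ m : Fin N, if (k : ℕ) + m = (j : ℕ) then p k * q m else 0)
    (fun k _ => Finset.sum_nonneg fun m _ => by
      split_ifs
      exacts [mul_nonneg (hp0 k) (hq0 m), le_rfl])
    (Finset.mem_univ i))

lemma conv_linear {N : ℕ} (p q1 q2 : Fin N → ℝ) (u v : ℝ) (j : Fin (2 * N - 1)) :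
    convPQ N p (u • q1 + v • q2) j = u * convPQ N p q1 j + v * convPQ N p q2 j := by
  unfold convPQ
  simp only [Pi.add_apply, Pi.smul_apply, smul_eq_mul, Finset.mul_sum,
    ← Finset.sum_add_distrib]
  refine Finset.sum_congr rfl fun k _ => Finset.sum_congr rfl fun l _ => ?_
  split_ifs <;> ring

lemma ident {N : ℕ} (hN : 0 < N) (p q : Fin N → ℝ)
    (hp0 : ∀ k, 0 ≤ p k) (hp1 : ∑ k, p k = 1) (hq0 : ∀ k, 0 ≤ q k) :
    ent (convPQ N p q) - ent q =
      ∑ i : Fin N, ∑ l : Fin N,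
        phiKL (p i * q l) (p i * convPQ N p q ⟨(i : ℕ) + l, by omega⟩) := by
  have hterm : ∀ i l : Fin N,
      phiKL (p i * q l) (p i * convPQ N p q ⟨(i : ℕ) + l, by omega⟩)
        = p i * q l * Real.log (q l)
          - p i * q l * Real.log (convPQ N p q ⟨(i : ℕ) + l, by omega⟩) := by
    intro i l
    set j : Fin (2 * N - 1) := ⟨(i : ℕ) + l, by omega⟩ with hjdef
    rcases eq_or_lt_of_le (mul_nonneg (hp0 i) (hq0 l)) with h0 | h0
    · simp [phiKL, ← h0]
    · have hpi : 0 < p i := by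
        rcases (hp0 i).lt_or_eq with h | h
        · exact h
        · exfalso; rw [← h] at h0; simp at h0
      have hql : 0 < q l := by
        rcases (hq0 l).lt_or_eq with h | h
        · exact h
        · exfalso; rw [← h] at h0; simp at h0
      have hr : 0 < convPQ N p q j := lt_of_lt_of_le h0 (conv_ge hp0 hq0 i l j rfl)
      unfold phiKL
      rw [Real.log_mul hpi.ne' hql.ne', Real.log_mul hpi.ne' hr.ne']
      ring
  simp_rw [hterm]
  rw [Finset.sum_congr rfl (fun i _ => Finset.sum_sub_distrib _ _), Finset.sum_sub_distrib]
  have hA : ∑ i : Fin N, ∑ l : Fin N, p i * q l * Real.log (q l)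
      = ∑ l : Fin N, q l * Real.log (q l) := by
    calc ∑ i : Fin N, ∑ l : Fin N, p i * q l * Real.log (q l)
        = ∑ i : Fin N, p i * ∑ l : Fin N, q l * Real.log (q l) := by
          refine Finset.sum_congr rfl fun i _ => ?_
          rw [Finset.mul_sum]; refine Finset.sum_congr rfl fun l _ => by ring
      _ = (∑ i : Fin N, p i) * ∑ l : Fin N, q l * Real.log (q l) := by
          rw [← Finset.sum_mul]
      _ = ∑ l : Fin N, q l * Real.log (q l) := by rw [hp1, one_mul]
  have hB : ∑ i : Fin N, ∑ l : Fin N,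
        p i * q l * Real.log (convPQ N p q ⟨(i : ℕ) + l, by omega⟩)
      = ∑ j, convPQ N p q j * Real.log (convPQ N p q j) := by
    have expand : ∀ j : Fin (2 * N - 1),
        convPQ N p q j * Real.log (convPQ N p q j)
          = ∑ i : Fin N, ∑ l : Fin N,
              if (i : ℕ) + l = (j : ℕ) then p i * q l * Real.log (convPQ N p q j) else 0 := by
      intro j
      nth_rewrite 1 [show convPQ N p q j = ∑ k : Fin N, ∑ l : Fin N,
        if (k : ℕ) + l = (j : ℕ) then p k * q l else 0 from rfl]
      rw [Finset.sum_mul]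
      refine Finset.sum_congr rfl fun i _ => ?_
      rw [Finset.sum_mul]
      refine Finset.sum_congr rfl fun l _ => ?_
      split_ifs <;> simp
    calc ∑ i : Fin N, ∑ l : Fin N,
            p i * q l * Real.log (convPQ N p q ⟨(i : ℕ) + l, by omega⟩)
        = ∑ i : Fin N, ∑ l : Fin N, ∑ j : Fin (2 * N - 1),
            if (i : ℕ) + l = (j : ℕ) then p i * q l * Real.log (convPQ N p q j) else 0 := by
          refine Finset.sum_congr rfl fun i _ => Finset.sum_congr rfl fun l _ => ?_
          rw [Finset.sum_eq_single_of_mem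
            (f := fun j : Fin (2 * N - 1) =>
              if (i : ℕ) + l = (j : ℕ) then p i * q l * Real.log (convPQ N p q j) else 0)
            (⟨(i : ℕ) + l, by omega⟩ : Fin (2 * N - 1)) (Finset.mem_univ _)
            (fun j _ hj => if_neg fun h => hj (Fin.ext h.symm))]
          simp
      _ = ∑ i : Fin N, ∑ j : Fin (2 * N - 1), ∑ l : Fin N,
            if (i : ℕ) + l = (j : ℕ) then p i * q l * Real.log (convPQ N p q j) else 0 :=
          Finset.sum_congr rfl fun i _ => Finset.sum_comm
      _ = ∑ j : Fin (2 * N - 1), ∑ i : Fin N, ∑ l : Fin N,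
            if (i : ℕ) + l = (j : ℕ) then p i * q l * Real.log (convPQ N p q j) else 0 :=
          Finset.sum_comm
      _ = ∑ j, convPQ N p q j * Real.log (convPQ N p q j) :=
          Finset.sum_congr rfl fun j _ => (expand j).symm
  rw [hA, hB]
  unfold ent
  ring

/-- For a fixed probability vector `p`, the map `q ↦ H(p * q) - H(q)` (with
`p * q` the convolution, i.e. the mutual information `I[Y+Z; Y]` for
independent `Y ~ p`, `Z ~ q`) is convex on the probability simplex. -/
theorem stmt11 (N : ℕ) (p : Fin N → ℝ)
    (hp0 : ∀ k, 0 ≤ p k) (hp1 : ∑ k, p k = 1) :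
    ConvexOn ℝ {q : Fin N → ℝ | (∀ k, 0 ≤ q k) ∧ ∑ k, q k = 1}
      (fun q => ent (convPQ N p q) - ent q) := by
  rcases Nat.eq_zero_or_pos N with hN | hN
  · subst hN
    simp at hp1
  constructor
  · exact convex_stdSimplex ℝ (Fin N)
  · rintro q1 ⟨hq10, hq11⟩ q2 ⟨hq20, hq21⟩ u v hu hv huv
    have hqm0 : ∀ k, 0 ≤ (u • q1 + v • q2) k := fun k => by
      simp only [Pi.add_apply, Pi.smul_apply, smul_eq_mul]
      exact add_nonneg (mul_nonneg hu (hq10 k)) (mul_nonneg hv (hq20 k))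
    show ent (convPQ N p (u • q1 + v • q2)) - ent (u • q1 + v • q2)
        ≤ u * (ent (convPQ N p q1) - ent q1) + v * (ent (convPQ N p q2) - ent q2)
    rw [ident hN p q1 hp0 hp1 hq10, ident hN p q2 hp0 hp1 hq20,
      ident hN p _ hp0 hp1 hqm0]
    simp only [Finset.mul_sum]
    rw [← Finset.sum_add_distrib]
    refine Finset.sum_le_sum fun i _ => ?_
    rw [← Finset.sum_add_distrib]
    refine Finset.sum_le_sum fun l _ => ?_
    have e1 : p i * (u • q1 + v • q2) l = u * (p i * q1 l) + v * (p i * q2 l) := by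
      simp only [Pi.add_apply, Pi.smul_apply, smul_eq_mul]; ring
    have e2 : p i * convPQ N p (u • q1 + v • q2) ⟨(i : ℕ) + l, by omega⟩
        = u * (p i * convPQ N p q1 ⟨(i : ℕ) + l, by omega⟩)
          + v * (p i * convPQ N p q2 ⟨(i : ℕ) + l, by omega⟩) := by
      rw [conv_linear]; ring
    rw [e1, e2]
    refine phi_cvx (mul_nonneg (hp0 i) (hq10 l))
      (mul_nonneg (hp0 i) (conv_nonneg hp0 hq10 _)) ?_
      (mul_nonneg (hp0 i) (hq20 l))
      (mul_nonneg (hp0 i) (conv_nonneg hp0 hq20 _)) ?_ hu hv huv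
    · intro h
      rcases mul_eq_zero.mp h with h | h
      · simp [h]
      · have := conv_ge hp0 hq10 i l ⟨(i : ℕ) + l, by omega⟩ rfl
        rw [h] at this
        exact le_antisymm this (mul_nonneg (hp0 i) (hq10 l))
    · intro h
      rcases mul_eq_zero.mp h with h | h
      · simp [h]
      · have := conv_ge hp0 hq20 i l ⟨(i : ℕ) + l, by omega⟩ rfl
        rw [h] at this
        exact le_antisymm this (mul_nonneg (hp0 i) (hq20 l))
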